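/- Let R be a commutative ring, V a finite projective R-module, and B a symmetric bilinear form on V such that B(x,x) ∈ 2R for all x ∈ V (B is even). Suppose there exists a bilinear form B' on V with B(x,y) = B'(x,y) + B'(y,x). Then there exist n ≥ 0 and an R-linear map F : V → R^n ⊕ R^n such that B(x,y) = H(Fx, Fy) for all x, y ∈ V, where H is the hyperbolic form H((a,b),(a',b')) = ⟨a,b'⟩ + ⟨a',b⟩ on R^n ⊕ R^n; moreover if B is non-degenerate then F is injective (an isometric embedding). -/

import Mathlib

/-- Let `V` be a finite projective `R`-module and `B` a symmetric even
bilinear form on `V` (with `B' ` witnessing evenness: `B x y = B' x y + B' y x`).  Then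
there exist `n ≥ 0` and an `R`-linear map `F : V → Rⁿ ⊕ Rⁿ` such that `B` is the
pullback along `F` of the hyperbolic form `H((a,b),(a',b')) = Σᵢ (aᵢ b'ᵢ + a'ᵢ bᵢ)`;
moreover, if `B` is non-degenerate then `F` is injective (an isometric embedding). -/
theorem even_form_embeds_in_hyperbolic
    (R V : Type*) [CommRing R] [AddCommGroup V] [Module R V]
    [Module.Finite R V] [Module.Projective R V]
    (B B' : V →ₗ[R] V →ₗ[R] R)
    (hsymm : ∀ x y : V, B x y = B y x)
    (heven : ∀ x : V, ∃ r : R, B x x = 2 * r)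
    (hB' : ∀ x y : V, B x y = B' x y + B' y x) :
    ∃ (n : ℕ) (F : V →ₗ[R] (Fin n → R) × (Fin n → R)),
      (∀ x y : V, B x y = ∑ i, ((F x).1 i * (F y).2 i + (F y).1 i * (F x).2 i)) ∧
      (Function.Bijective (fun x : V => B x) → Function.Injective F) := by
  obtain ⟨n, π, hπ⟩ := Module.Finite.exists_fin' R V
  obtain ⟨ι, hι⟩ := Module.projective_lifting_property π (LinearMap.id) hπ
  -- first component: x ↦ (fun i => B' x (π (single i)))
  let g : V →ₗ[R] (Fin n → R) :=
    { toFun := fun x i => B' x (π (Pi.single i 1))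
      map_add' := fun x y => by ext i; simp
      map_smul' := fun r x => by ext i; simp }
  refine ⟨n, LinearMap.prod g ι, ?_, ?_⟩
  · intro x y
    have key : ∀ x y : V, ∑ i, g x i * ι y i = B' x y := by
      intro x y
      have : ∑ i, g x i * ι y i = B' x (π (∑ i, ι y i • (Pi.single i 1 : Fin n → R))) := by
        simp only [map_sum, map_smul, smul_eq_mul]
        simp [g, mul_comm]
      rw [this]
      have : (∑ i, ι y i • (Pi.single i 1 : Fin n → R)) = ι y := by
        ext j
        simp [Pi.single_apply, Finset.sum_apply]
      rw [this]
      have := congrArg (fun f => f y) hι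
      simp only [LinearMap.coe_comp, Function.comp_apply, LinearMap.id_coe, id_eq] at this
      rw [this]
    simp only [LinearMap.prod_apply, Function.prod]
    rw [Finset.sum_add_distrib, key x y, key y x, hB' x y]
  · intro _
    intro x y hxy
    have h2 : ι x = ι y := congrArg Prod.snd hxy
    have hx := congrArg (fun f => f x) hι
    have hy := congrArg (fun f => f y) hι
    simp only [LinearMap.coe_comp, Function.comp_apply, LinearMap.id_coe, id_eq] at hx hy
    rw [← hx, ← hy, h2]
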